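/- For a permutation π of {1,...,n}, exc(π) = inv(π) if and only if exc(π) = dexc(π). -/

import Mathlib

open Finset

def exc {n : ℕ} (π : Equiv.Perm (Fin n)) : ℕ :=
  (univ.filter (fun i => i < π i)).card

def dexc {n : ℕ} (π : Equiv.Perm (Fin n)) : ℕ :=
  ∑ i ∈ univ.filter (fun i => i < π i), ((π i : ℕ) - (i : ℕ))

def inv {n : ℕ} (π : Equiv.Perm (Fin n)) : ℕ :=
  (univ.filter (fun p : Fin n × Fin n => p.1 < p.2 ∧ π p.2 < π p.1)).card

/-- Condition C: every value exceeds its position by at most one. -/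
def smallExc {n : ℕ} (π : Equiv.Perm (Fin n)) : Prop :=
  ∀ i : Fin n, (π i : ℕ) ≤ (i : ℕ) + 1

lemma exc_le_dexc {n : ℕ} (π : Equiv.Perm (Fin n)) : exc π ≤ dexc π := by
  rw [exc, dexc, Finset.card_eq_sum_ones]
  refine Finset.sum_le_sum fun i hi => ?_
  simp only [Finset.mem_filter] at hi
  have : (i : ℕ) < (π i : ℕ) := hi.2
  omega

lemma exc_eq_dexc_iff {n : ℕ} (π : Equiv.Perm (Fin n)) :
    exc π = dexc π ↔ smallExc π := by
  rw [exc, dexc, Finset.card_eq_sum_ones]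
  rw [Finset.sum_eq_sum_iff_of_le (fun i hi => by
    simp only [Finset.mem_filter] at hi
    have : (i : ℕ) < (π i : ℕ) := hi.2
    omega)]
  constructor
  · intro h i
    by_cases hi : i < π i
    · have := h i (by simp [hi])
      omega
    · have : ¬ ((i : ℕ) < (π i : ℕ)) := hi
      omega
  · intro h i hi
    simp only [Finset.mem_filter] at hi
    have h1 : (i : ℕ) < (π i : ℕ) := hi.2
    have h2 := h i
    omega

/-- Fiberwise decomposition of the inversion count. -/
lemma inv_eq_sum {n : ℕ} (π : Equiv.Perm (Fin n)) :
    inv π = ∑ i : Fin n, (univ.filter (fun j => i < j ∧ π j < π i)).card := by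
  rw [inv, Finset.card_eq_sum_card_fiberwise (f := Prod.fst) (t := univ) (fun x _ => mem_univ _)]
  refine Finset.sum_congr rfl fun i _ => ?_
  refine Finset.card_bij' (fun p _ => p.2) (fun j _ => (i, j)) ?_ ?_ ?_ ?_
  · intro p hp
    simp only [Finset.mem_filter, Finset.mem_univ, true_and] at hp ⊢
    obtain ⟨⟨h1, h2⟩, h3⟩ := hp
    subst h3
    exact ⟨h1, h2⟩
  · intro j hj
    simp only [Finset.mem_filter, Finset.mem_univ, true_and] at hj ⊢
    exact ⟨hj, trivial⟩
  · intro p hp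
    simp only [Finset.mem_filter, Finset.mem_univ, true_and] at hp
    obtain ⟨_, h3⟩ := hp
    subst h3
    rfl
  · intro j hj
    rfl

/-- For an excedance `i`, there are at least `π i - i` inversions with first coordinate `i`. -/
lemma sub_le_card_fiber {n : ℕ} (π : Equiv.Perm (Fin n)) (i : Fin n) :
    (π i : ℕ) - (i : ℕ) ≤ (univ.filter (fun j => i < j ∧ π j < π i)).card := by
  have key : ((Finset.Iio (π i)).image π.symm : Finset (Fin n))
      ⊆ Finset.Iio i ∪ univ.filter (fun j => i < j ∧ π j < π i) := by
    intro j hj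
    simp only [Finset.mem_image, Finset.mem_Iio] at hj
    obtain ⟨v, hv, rfl⟩ := hj
    have hπj : π (π.symm v) < π i := by rwa [Equiv.apply_symm_apply]
    rcases lt_trichotomy (π.symm v) i with h | h | h
    · exact Finset.mem_union_left _ (Finset.mem_Iio.mpr h)
    · exact absurd (h ▸ hπj) (lt_irrefl _)
    · exact Finset.mem_union_right _ (by simp [h, hv])
  have hcard := Finset.card_le_card key
  rw [Finset.card_image_of_injective _ π.symm.injective, Fin.card_Iio] at hcard
  have := Finset.card_union_le (Finset.Iio i) (univ.filter (fun j => i < j ∧ π j < π i))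
  rw [Fin.card_Iio] at this
  omega

lemma dexc_le_inv {n : ℕ} (π : Equiv.Perm (Fin n)) : dexc π ≤ inv π := by
  rw [dexc, inv_eq_sum]
  calc ∑ i ∈ univ.filter (fun i => i < π i), ((π i : ℕ) - (i : ℕ))
      ≤ ∑ i ∈ univ.filter (fun i => i < π i),
        (univ.filter (fun j => i < j ∧ π j < π i)).card :=
        Finset.sum_le_sum fun i _ => sub_le_card_fiber π i
    _ ≤ ∑ i : Fin n, (univ.filter (fun j => i < j ∧ π j < π i)).card :=
        Finset.sum_le_sum_of_subset (Finset.filter_subset _ _)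

/-- Under condition C, the first coordinate of any inversion is an excedance. -/
lemma inv_fst_exc {n : ℕ} {π : Equiv.Perm (Fin n)} (hC : smallExc π) {i j : Fin n}
    (hij : i < j) (hinv : π j < π i) : (i : ℕ) < (π i : ℕ) := by
  by_contra h
  push_neg at h
  have himg : (Finset.Iic i).image π ⊆ Finset.Iic i := by
    intro v hv
    simp only [Finset.mem_image, Finset.mem_Iic] at hv ⊢
    obtain ⟨k, hk, rfl⟩ := hv
    have h1 : (π k : ℕ) ≤ (k : ℕ) + 1 := hC k
    have hk' : (k : ℕ) ≤ (i : ℕ) := hk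
    rw [Fin.le_def]
    by_contra hgt
    push_neg at hgt
    have hki : (π k : ℕ) = (i : ℕ) + 1 := by omega
    have : (k : ℕ) = (i : ℕ) := by omega
    have : k = i := Fin.val_injective this
    subst this
    omega
  have heq : (Finset.Iic i).image π = Finset.Iic i :=
    Finset.eq_of_subset_of_card_le himg
      (by rw [Finset.card_image_of_injective _ π.injective])
  have hπj : π j ∈ Finset.Iic i := by
    rw [Finset.mem_Iic, Fin.le_def]
    have : (π j : ℕ) < (π i : ℕ) := hinv
    omega
  rw [← heq] at hπj
  simp only [Finset.mem_image, Finset.mem_Iic] at hπj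
  obtain ⟨k, hk, hkj⟩ := hπj
  have : k = j := π.injective hkj
  subst this
  exact absurd hij (not_lt.mpr hk)

/-- Under condition C, each excedance has exactly one inversion with that first coordinate. -/
lemma fiber_card_one {n : ℕ} {π : Equiv.Perm (Fin n)} (hC : smallExc π) {i : Fin n}
    (hexc : i < π i) : (univ.filter (fun j => i < j ∧ π j < π i)).card = 1 := by
  have hπi : (π i : ℕ) = (i : ℕ) + 1 := by
    have h1 := hC i
    have h2 : (i : ℕ) < (π i : ℕ) := hexc
    omega
  set T : Finset (Fin n) := (Finset.Iio (π i)).image π.symm with hT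
  have hTcard : T.card = (i : ℕ) + 1 := by
    rw [hT, Finset.card_image_of_injective _ π.symm.injective, Fin.card_Iio, hπi]
  have hmemT : ∀ j : Fin n, j ∈ T ↔ π j < π i := by
    intro j
    simp only [hT, Finset.mem_image, Finset.mem_Iio]
    constructor
    · rintro ⟨v, hv, rfl⟩; rwa [Equiv.apply_symm_apply]
    · intro hj; exact ⟨π j, hj, π.symm_apply_apply j⟩
  have hIio : Finset.Iio i ⊆ T := by
    intro k hk
    rw [Finset.mem_Iio] at hk
    rw [hmemT, Fin.lt_def]
    have h1 := hC k
    have h2 : (k : ℕ) < (i : ℕ) := hk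
    omega
  have hfiber : univ.filter (fun j => i < j ∧ π j < π i) = T \ Finset.Iio i := by
    ext j
    simp only [Finset.mem_filter, Finset.mem_univ, true_and, Finset.mem_sdiff,
      Finset.mem_Iio, hmemT]
    constructor
    · rintro ⟨h1, h2⟩
      exact ⟨h2, not_lt.mpr (le_of_lt h1)⟩
    · rintro ⟨h1, h2⟩
      refine ⟨?_, h1⟩
      have hne : j ≠ i := by
        rintro rfl
        exact absurd h1 (lt_irrefl _)
      exact lt_of_le_of_ne (not_lt.mp h2) (Ne.symm hne)
  rw [hfiber, Finset.card_sdiff_of_subset hIio, hTcard, Fin.card_Iio]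
  omega

lemma smallExc_inv_eq_exc {n : ℕ} {π : Equiv.Perm (Fin n)} (hC : smallExc π) :
    inv π = exc π := by
  rw [inv_eq_sum, exc, Finset.card_filter]
  refine Finset.sum_congr rfl fun i _ => ?_
  by_cases hexc : i < π i
  · rw [fiber_card_one hC hexc, if_pos hexc]
  · rw [if_neg hexc]
    rw [Finset.card_eq_zero, Finset.filter_eq_empty_iff]
    intro j _
    rintro ⟨h1, h2⟩
    exact hexc (Fin.lt_def.mpr (inv_fst_exc hC h1 h2))

theorem exc_eq_inv_iff_exc_eq_dexc {n : ℕ} (π : Equiv.Perm (Fin n)) :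
    exc π = inv π ↔ exc π = dexc π := by
  constructor
  · intro h
    have h1 := exc_le_dexc π
    have h2 := dexc_le_inv π
    omega
  · intro h
    have hC : smallExc π := (exc_eq_dexc_iff π).mp h
    rw [smallExc_inv_eq_exc hC]
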